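/- If T' is a pseudo MUL-tree on X, N is a phylogenetic network on X, and g : T' → N is a folding map, then T' is isomorphic to the path-tree U*(N). In other words, U*(N) is the unique (up to isomorphism) pseudo MUL-tree admitting a folding map onto N. -/

import Mathlib

/-! Basic framework: labelled rooted directed multigraphs, phylogenetic
networks, (pseudo) MUL-trees, unfolding, folding maps, etc. -/

structure Dgr (X : Type) : Type 1 where
  V : Type
  A : Type
  tl : A → V
  hd : A → V
  root : V
  lab : V → Option X

namespace Dgr

variable {X : Type}

/-- There is an arc from `u` to `v`. -/
def arcRel (G : Dgr X) (u v : G.V) : Prop := ∃ a : G.A, G.tl a = u ∧ G.hd a = v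

/-- `v` is reachable from `u` by a directed path (possibly trivial);
equivalently, `v` is below `u` or equal to it. -/
def Reaches (G : Dgr X) : G.V → G.V → Prop := Relation.ReflTransGen G.arcRel

noncomputable def indeg (G : Dgr X) (v : G.V) : ℕ := Nat.card {a : G.A // G.hd a = v}
noncomputable def outdeg (G : Dgr X) (v : G.V) : ℕ := Nat.card {a : G.A // G.tl a = v}

def IsLeaf (G : Dgr X) (v : G.V) : Prop := G.outdeg v = 0

def Acyclic (G : Dgr X) : Prop := ∀ v, ¬ Relation.TransGen G.arcRel v v

/-- A finite rooted DAG: acyclic, the root has in-degree zero and every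
vertex is reachable from the root. -/
def IsRootedDAG (G : Dgr X) : Prop :=
  Finite G.V ∧ Finite G.A ∧ G.Acyclic ∧ G.indeg G.root = 0 ∧ ∀ v, G.Reaches G.root v

/-- A tree vertex: in-degree one, out-degree zero (a leaf) or at least two. -/
def IsTreeVertex (G : Dgr X) (v : G.V) : Prop :=
  G.indeg v = 1 ∧ (G.outdeg v = 0 ∨ 2 ≤ G.outdeg v)

/-- A reticulation vertex: out-degree one and in-degree at least two. -/
def IsRetVertex (G : Dgr X) (v : G.V) : Prop := G.outdeg v = 1 ∧ 2 ≤ G.indeg v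

/-- An `X`-network: rooted DAG (multi-arcs allowed), root of out-degree ≥ 2,
every non-root vertex a tree vertex or a reticulation vertex, and the leaves
are labelled bijectively by `X`. -/
def IsXNetwork (G : Dgr X) : Prop :=
  G.IsRootedDAG ∧ 2 ≤ G.outdeg G.root ∧
  (∀ v, v ≠ G.root → G.IsTreeVertex v ∨ G.IsRetVertex v) ∧
  (∀ v, (∃ x, G.lab v = some x) ↔ G.IsLeaf v) ∧
  (∀ x : X, ∃! v, G.lab v = some x)

def NoMultiArcs (G : Dgr X) : Prop :=
  ∀ a b : G.A, G.tl a = G.tl b → G.hd a = G.hd b → a = b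

/-- A phylogenetic network on `X`: an `X`-network without multi-arcs. -/
def IsPhyloNetwork (G : Dgr X) : Prop := G.IsXNetwork ∧ G.NoMultiArcs

/-- A phylogenetic tree on `X`: a phylogenetic network with no reticulations. -/
def IsPhyloTree (G : Dgr X) : Prop := G.IsPhyloNetwork ∧ ∀ v, ¬ G.IsRetVertex v

/-- A pseudo MUL-tree on `X`: a finite rooted tree whose leaves are labelled
by elements of `X` (several leaves may share a label, every element of `X`
is used, and exactly the leaves are labelled). -/
def IsPMulTree (G : Dgr X) : Prop :=
  G.IsRootedDAG ∧ (∀ v, v ≠ G.root → G.indeg v = 1) ∧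
  (∀ v, (∃ x, G.lab v = some x) ↔ G.IsLeaf v) ∧
  (∀ x : X, ∃ v, G.lab v = some x)

/-- A MUL-tree: a pseudo MUL-tree with no in-degree-one out-degree-one vertex. -/
def IsMulTree (G : Dgr X) : Prop :=
  G.IsPMulTree ∧ ∀ v, ¬ (G.indeg v = 1 ∧ G.outdeg v = 1)

/-- Isomorphism of labelled rooted directed multigraphs. -/
def Iso (G H : Dgr X) : Prop :=
  ∃ (φ : G.V ≃ H.V) (ψ : G.A ≃ H.A),
    (∀ a, H.tl (ψ a) = φ (G.tl a)) ∧ (∀ a, H.hd (ψ a) = φ (G.hd a)) ∧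
    φ G.root = H.root ∧ (∀ v, H.lab (φ v) = G.lab v)

/-- The pendant subgraph rooted at `v` (everything below or equal to `v`). -/
def pendant (G : Dgr X) (v : G.V) : Dgr X where
  V := {w : G.V // G.Reaches v w}
  A := {a : G.A // G.Reaches v (G.tl a)}
  tl a := ⟨G.tl a.1, a.2⟩
  hd a := ⟨G.hd a.1, a.2.tail ⟨a.1, rfl, rfl⟩⟩
  root := ⟨v, Relation.ReflTransGen.refl⟩
  lab w := G.lab w.1

/-- Directed paths in `G` starting at the root, ending at the index vertex. -/
inductive RPath (G : Dgr X) : G.V → Type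
  | nil : RPath G G.root
  | cons {v : G.V} (p : RPath G v) (a : G.A) (h : G.tl a = v) : RPath G (G.hd a)

/-- The path-tree `U*(G)`: vertices are directed root-paths of `G`, arcs are
one-arc extensions, the label of a path is the label of its last vertex. -/
def Ustar (G : Dgr X) : Dgr X where
  V := Σ v : G.V, RPath G v
  A := Σ v : G.V, RPath G v × {a : G.A // G.tl a = v}
  tl x := ⟨x.1, x.2.1⟩
  hd x := ⟨G.hd x.2.2.1, RPath.cons x.2.1 x.2.2.1 x.2.2.2⟩
  root := ⟨G.root, RPath.nil⟩
  lab x := G.lab x.1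

/-- Vertices kept by the suppression operation (the root is always kept). -/
def Keep (G : Dgr X) (v : G.V) : Prop :=
  v = G.root ∨ ¬ (G.indeg v = 1 ∧ G.outdeg v = 1)

def startV (G : Dgr X) (l : List G.A) : G.V :=
  match l.head? with
  | some a => G.tl a
  | none => G.root

def endV (G : Dgr X) (l : List G.A) : G.V :=
  match l.getLast? with
  | some a => G.hd a
  | none => G.root

/-- `l` is a composable sequence of arcs. -/
def IsChain (G : Dgr X) (l : List G.A) : Prop :=
  ∀ p a b s, l = p ++ a :: b :: s → G.hd a = G.tl b

/-- An arc of the suppression: a nonempty directed path between kept vertices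
all of whose intermediate vertices are suppressed. -/
def IsSuppArc (G : Dgr X) (l : List G.A) : Prop :=
  l ≠ [] ∧ G.IsChain l ∧ G.Keep (G.startV l) ∧ G.Keep (G.endV l) ∧
  ∀ p a s, l = p ++ a :: s → s ≠ [] → ¬ G.Keep (G.hd a)

/-- Suppression of all in-degree-one out-degree-one vertices. -/
def suppress (G : Dgr X) : Dgr X where
  V := {v : G.V // G.Keep v}
  A := {l : List G.A // G.IsSuppArc l}
  tl l := ⟨G.startV l.1, l.2.2.2.1⟩
  hd l := ⟨G.endV l.1, l.2.2.2.2.1⟩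
  root := ⟨G.root, Or.inl rfl⟩
  lab v := G.lab v.1

/-- The unfolding `U(G)`: the path-tree with in-degree-one out-degree-one
vertices suppressed. -/
def U (G : Dgr X) : Dgr X := G.Ustar.suppress

/-- An `X`-morphism: maps on vertices and arcs commuting with heads and tails
and preserving the leaf-labelling by `X`. -/
structure Mor (G H : Dgr X) where
  fV : G.V → H.V
  fA : G.A → H.A
  tl_comm : ∀ a, H.tl (fA a) = fV (G.tl a)
  hd_comm : ∀ a, H.hd (fA a) = fV (G.hd a)
  lab_pres : ∀ v x, G.lab v = some x → H.lab (fV v) = some x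

def Mor.IsRooted {G H : Dgr X} (f : Mor G H) : Prop := f.fV G.root = H.root

/-- A folding map: a surjective `X`-morphism with the unique arc-lifting
property. -/
def Mor.IsFolding {G H : Dgr X} (f : Mor G H) : Prop :=
  Function.Surjective f.fV ∧ Function.Surjective f.fA ∧
  ∀ (a : H.A) (v : G.V), f.fV v = H.tl a →
    ∃! b : G.A, G.tl b = v ∧ f.fA b = a

/-- The canonical map `U*(G) → G` sending a root-path to its last vertex. -/
def fstar (G : Dgr X) : Mor G.Ustar G where
  fV x := x.1
  fA x := x.2.2.1
  tl_comm a := a.2.2.2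
  hd_comm _ := rfl
  lab_pres _ _ h := h

/-- `v` is an interior vertex of the arc-sequence `l`. -/
def IsInteriorOf (G : Dgr X) (l : List G.A) (v : G.V) : Prop :=
  ∃ p a s, l = p ++ a :: s ∧ s ≠ [] ∧ G.hd a = v

/-- `G'` is a subdivision of `G`. -/
def IsSubdivisionOf (G' G : Dgr X) : Prop :=
  ∃ (φ : G.V → G'.V) (ψ : G.A → List G'.A),
    Function.Injective φ ∧ φ G.root = G'.root ∧
    (∀ v, G'.lab (φ v) = G.lab v) ∧
    (∀ a, ψ a ≠ [] ∧ G'.IsChain (ψ a) ∧ G'.startV (ψ a) = φ (G.tl a) ∧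
      G'.endV (ψ a) = φ (G.hd a) ∧
      ∀ v, G'.IsInteriorOf (ψ a) v → v ∉ Set.range φ) ∧
    (∀ v' : G'.V, v' ∉ Set.range φ →
      G'.indeg v' = 1 ∧ G'.outdeg v' = 1 ∧ G'.lab v' = none) ∧
    (∀ a' : G'.A, ∃! a : G.A, a' ∈ ψ a)

/-- `H` is (isomorphic to) a subgraph of `G`. -/
def IsSubgraphOf (H G : Dgr X) : Prop :=
  ∃ (φ : H.V → G.V) (ψ : H.A → G.A),
    Function.Injective φ ∧ Function.Injective ψ ∧
    (∀ a, G.tl (ψ a) = φ (H.tl a)) ∧ (∀ a, G.hd (ψ a) = φ (H.hd a)) ∧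
    (∀ v, H.lab v = G.lab (φ v))

/-- `G` displays `T`: some subgraph of `G` is a subdivision of `T`. -/
def Displays (G T : Dgr X) : Prop :=
  ∃ H : Dgr X, IsSubgraphOf H G ∧ IsSubdivisionOf H T

/-- `T` is weakly displayed by `G`: `T` is displayed by the unfolding `U(G)`. -/
def WeaklyDisplays (G T : Dgr X) : Prop := Displays G.U T

/-- `N` is (isomorphic to) the folding `F(T)` of the MUL-tree `T`: `N` is an
`X`-network obtained as the quotient of a subdivision `T'` of `T` by the
relation identifying vertices with isomorphic pendant subtrees, the quotient
map being a folding map whose fibres are exactly the classes of that relation. -/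
def IsFoldingOf (N T : Dgr X) : Prop :=
  N.IsXNetwork ∧ ∃ T' : Dgr X, IsSubdivisionOf T' T ∧
    ∃ f : Mor T' N, f.IsFolding ∧
      ∀ u v : T'.V, f.fV u = f.fV v ↔ Iso (T'.pendant u) (T'.pendant v)

/-- `N` is stable: `F(U(N))` is isomorphic to `N`. -/
def Stable (N : Dgr X) : Prop :=
  ∃ N' : Dgr X, IsFoldingOf N' N.U ∧ Iso N' N

/-- `T'` is the guide tree `T†` of the folding operation applied to `T`:
a subdivision of `T` whose quotient by the isomorphic-pendant-subtree
relation is an `X`-network via a folding map. -/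
def IsDaggerOf (T' T : Dgr X) : Prop :=
  IsSubdivisionOf T' T ∧ ∃ (N : Dgr X) (f : Mor T' N), N.IsXNetwork ∧
    f.IsFolding ∧
    ∀ u v : T'.V, f.fV u = f.fV v ↔ Iso (T'.pendant u) (T'.pendant v)

/-- The child of every reticulation vertex is a tree vertex. -/
def Compressed (N : Dgr X) : Prop :=
  ∀ a : N.A, N.IsRetVertex (N.tl a) → N.IsTreeVertex (N.hd a)

/-- Every (non-leaf) tree vertex has out-degree two. -/
def SemiResolved (N : Dgr X) : Prop :=
  ∀ v, N.indeg v = 1 → N.outdeg v = 0 ∨ N.outdeg v = 2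

/-- Binary phylogenetic network. -/
def BinaryNet (N : Dgr X) : Prop :=
  N.outdeg N.root = 2 ∧ ∀ v, v ≠ N.root →
    (N.IsRetVertex v → N.indeg v = 2) ∧
    (N.indeg v = 1 → N.outdeg v = 0 ∨ N.outdeg v = 2)

/-- Binary tree: every vertex has out-degree zero or two. -/
def BinaryTree (T : Dgr X) : Prop := ∀ v, T.outdeg v = 0 ∨ T.outdeg v = 2

/-- The set of children of a vertex. -/
def children (N : Dgr X) (v : N.V) : Set N.V := {w | ∃ a, N.tl a = v ∧ N.hd a = w}

/-- Tree-sibling network: every reticulation vertex has a sibling that is a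
tree vertex. -/
def TreeSibling (N : Dgr X) : Prop :=
  ∀ v, N.IsRetVertex v → ∃ w, w ≠ v ∧ N.IsTreeVertex w ∧
    ∃ a b : N.A, N.tl a = N.tl b ∧ N.hd a = v ∧ N.hd b = w

/-- The final vertex in `N` of (the path underlying) a vertex of `U(N)`. -/
def endOf (N : Dgr X) (p : N.U.V) : N.V := p.1.1

/-- Identifiable pair of tree vertices. -/
def Identifiable (N : Dgr X) (v w : N.V) : Prop :=
  v ≠ w ∧ N.IsTreeVertex v ∧ N.IsTreeVertex w ∧
  ∃ p q : N.U.V, N.endOf p = v ∧ N.endOf q = w ∧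
    Iso (N.U.pendant p) (N.U.pendant q)

/-- Irreducible network: no identifiable pair of tree vertices. -/
def Irreducible (N : Dgr X) : Prop := ¬ ∃ v w, N.Identifiable v w

/-- The pendant subtree at `v` is inextendible: some other vertex carries an
isomorphic pendant subtree. -/
def Inextendible (T : Dgr X) (v : T.V) : Prop :=
  ∃ v', v' ≠ v ∧ Iso (T.pendant v) (T.pendant v')

/-- A reconciliation map between a tree `T` and a network `N`. -/
structure Recon (T N : Dgr X) where
  r : T.V → N.V
  P : T.A → List N.A
  tree_or_root : ∀ v, r v = N.root ∨ N.IsTreeVertex (r v)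
  leaf_fix : ∀ v x, T.lab v = some x → N.lab (r v) = some x
  chain : ∀ a, N.IsChain (P a)
  trivialP : ∀ a, P a = [] → r (T.tl a) = r (T.hd a)
  startP : ∀ a, P a ≠ [] → N.startV (P a) = r (T.tl a)
  endP : ∀ a, P a ≠ [] → N.endV (P a) = r (T.hd a)

/-- Locally separated reconciliation: for any two distinct arcs of `T` with
the same tail, both associated paths are nonempty and have distinct initial
arcs. -/
def Recon.LocSep {T N : Dgr X} (ρ : Recon T N) : Prop :=
  ∀ a b : T.A, a ≠ b → T.tl a = T.tl b →
    ρ.P a ≠ [] ∧ ρ.P b ≠ [] ∧ (ρ.P a).head? ≠ (ρ.P b).head?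

/-- The pendant subnetwork `N(u)`: restrict below `u` and suppress. -/
def Nsub (N : Dgr X) (u : N.V) : Dgr X := (N.pendant u).suppress

/-- The function `τ` of the dynamic program (as a proposition, `τ(v,u)=1`). -/
def tau (T N : Dgr X) (v : T.V) (u : N.V) : Prop :=
  (T.IsLeaf v → ∀ x, T.lab v = some x →
     ∃ u' : N.V, N.lab u' = some x ∧ N.Reaches u u') ∧
  (¬ T.IsLeaf v → ∃ u' : N.V, (u' = N.root ∨ N.IsTreeVertex u') ∧
     N.Reaches u u' ∧ ∃ ρ : Recon (T.pendant v) (N.Nsub u'), ρ.LocSep)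

/-- The result of `HangLeaves(v)` on the network `N` (new leaves are labelled
by the two new elements of `X ⊕ Fin 2`); vertices `inr 0, 1, 2, 3, 4` are
`x_v, x'_v, p_v, q_v, ρ_v` respectively. -/
def HangN (N : Dgr X) (v : N.V) : Dgr (X ⊕ Fin 2) where
  V := N.V ⊕ Fin 5
  A := N.A ⊕ Fin 6
  tl := Sum.elim (fun a => Sum.inl (N.tl a))
    ![Sum.inr 4, Sum.inr 4, Sum.inr 2, Sum.inl v, Sum.inr 2, Sum.inr 3]
  hd := Sum.elim (fun a => Sum.inl (N.hd a))
    ![Sum.inl N.root, Sum.inr 2, Sum.inr 3, Sum.inr 3, Sum.inr 1, Sum.inr 0]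
  root := Sum.inr 4
  lab := Sum.elim (fun w => (N.lab w).map Sum.inl)
    ![some (Sum.inr 0), some (Sum.inr 1), none, none, none]

/-- The result of `HangLeaves` on the tree `T`; vertices `inr 0, 1, 2, 3` are
`x_v, x'_v, p_v, ρ_v` respectively. -/
def HangT (T : Dgr X) : Dgr (X ⊕ Fin 2) where
  V := T.V ⊕ Fin 4
  A := T.A ⊕ Fin 4
  tl := Sum.elim (fun a => Sum.inl (T.tl a))
    ![Sum.inr 3, Sum.inr 3, Sum.inr 2, Sum.inr 2]
  hd := Sum.elim (fun a => Sum.inl (T.hd a))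
    ![Sum.inl T.root, Sum.inr 2, Sum.inr 0, Sum.inr 1]
  root := Sum.inr 3
  lab := Sum.elim (fun w => (T.lab w).map Sum.inl)
    ![some (Sum.inr 0), some (Sum.inr 1), none, none]

namespace FoldAux

variable {T' N : Dgr X} {g : Mor T' N}

lemma no_arc_head (hfin : Finite T'.A) {v : T'.V} (hv : T'.indeg v = 0) (a : T'.A) :
    T'.hd a ≠ v := by
  intro h
  haveI : Nonempty {b : T'.A // T'.hd b = v} := ⟨⟨a, h⟩⟩
  exact absurd hv Nat.card_pos.ne'

lemma incoming_unique (hfin : Finite T'.A) {v : T'.V} (hv : T'.indeg v = 1)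
    {a b : T'.A} (ha : T'.hd a = v) (hb : T'.hd b = v) : a = b := by
  have hsub : Subsingleton {c : T'.A // T'.hd c = v} :=
    (Nat.card_eq_one_iff_unique.mp hv).1
  exact congrArg Subtype.val (hsub.elim ⟨a, ha⟩ ⟨b, hb⟩)

lemma reaches_root_eq (hN : N.IsPhyloNetwork) {u : N.V} (h : N.Reaches u N.root) :
    u = N.root := by
  rcases Relation.ReflTransGen.cases_tail h with h' | ⟨c, _, hc⟩
  · exact h'.symm
  · obtain ⟨a, _, ha2⟩ := hc
    exact absurd ha2 (no_arc_head hN.1.1.2.1 hN.1.1.2.2.2.1 a)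

lemma mor_reaches {u v : T'.V} (h : T'.Reaches u v) :
    N.Reaches (g.fV u) (g.fV v) := by
  induction h with
  | refl => exact Relation.ReflTransGen.refl
  | tail h₁ h₂ ih =>
      obtain ⟨b, hb1, hb2⟩ := h₂
      exact ih.tail ⟨g.fA b, by rw [g.tl_comm, hb1], by rw [g.hd_comm, hb2]⟩

lemma fV_root (hT : T'.IsPMulTree) (hN : N.IsPhyloNetwork) (hg : g.IsFolding) :
    g.fV T'.root = N.root := by
  obtain ⟨w, hw⟩ := hg.1 N.root
  have hRN : N.Reaches (g.fV T'.root) (g.fV w) := mor_reaches (hT.1.2.2.2.2 w)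
  rw [hw] at hRN
  exact reaches_root_eq hN hRN

noncomputable def lift (hg : g.IsFolding) (a : N.A) (v : T'.V) (h : g.fV v = N.tl a) :
    T'.A := (hg.2.2 a v h).choose

lemma lift_tl (hg : g.IsFolding) (a : N.A) (v : T'.V) (h : g.fV v = N.tl a) :
    T'.tl (lift hg a v h) = v := (hg.2.2 a v h).choose_spec.1.1

lemma lift_fA (hg : g.IsFolding) (a : N.A) (v : T'.V) (h : g.fV v = N.tl a) :
    g.fA (lift hg a v h) = a := (hg.2.2 a v h).choose_spec.1.2

lemma lift_eq (hg : g.IsFolding) (a : N.A) (v : T'.V) (h : g.fV v = N.tl a)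
    (b : T'.A) (h1 : T'.tl b = v) (h2 : g.fA b = a) : b = lift hg a v h :=
  (hg.2.2 a v h).choose_spec.2 b ⟨h1, h2⟩

noncomputable def psi (hg : g.IsFolding) (hroot : g.fV T'.root = N.root) :
    {u : N.V} → RPath N u → {w : T'.V // g.fV w = u}
  | _, .nil => ⟨T'.root, hroot⟩
  | _, .cons p a h =>
      ⟨T'.hd (lift hg a (psi hg hroot p).1 ((psi hg hroot p).2.trans h.symm)),
        by rw [← g.hd_comm, lift_fA]⟩

lemma psi_inj (hT : T'.IsPMulTree) (hg : g.IsFolding) (hroot : g.fV T'.root = N.root) :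
    ∀ {u : N.V} (p : RPath N u) {u' : N.V} (p' : RPath N u'),
      (psi hg hroot p).1 = (psi hg hroot p').1 →
      (⟨u, p⟩ : Σ v, RPath N v) = ⟨u', p'⟩ := by
  intro u p
  induction p with
  | nil =>
      intro u' p' hE
      cases p' with
      | nil => rfl
      | cons q' a' h' =>
          exact absurd hE.symm (no_arc_head hT.1.2.1 hT.1.2.2.2.1 _)
  | cons q a h ih =>
      intro u' p' hE
      cases p' with
      | nil => exact absurd hE (no_arc_head hT.1.2.1 hT.1.2.2.2.1 _)
      | cons q' a' h' =>
          set b := lift hg a (psi hg hroot q).1 ((psi hg hroot q).2.trans h.symm) with hbdef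
          set b' := lift hg a' (psi hg hroot q').1 ((psi hg hroot q').2.trans h'.symm) with hbdef'
          have hE' : T'.hd b = T'.hd b' := hE
          have hbne : T'.hd b ≠ T'.root := no_arc_head hT.1.2.1 hT.1.2.2.2.1 b
          have hbb' : b = b' :=
            incoming_unique hT.1.2.1 (hT.2.1 _ hbne) rfl hE'.symm
          have hfa : a = a' := by
            rw [hbdef] at hbb'
            rw [← lift_fA hg a (psi hg hroot q).1 ((psi hg hroot q).2.trans h.symm),
              hbb', lift_fA]
          have hs : (⟨_, q⟩ : Σ v, RPath N v) = ⟨_, q'⟩ := by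
            refine ih q' ?_
            rw [← lift_tl hg a (psi hg hroot q).1 ((psi hg hroot q).2.trans h.symm),
              ← lift_tl hg a' (psi hg hroot q').1 ((psi hg hroot q').2.trans h'.symm)]
            rw [← hbdef, ← hbdef', hbb']
          subst hfa
          injection hs with hv hq
          subst hv
          cases hq
          rfl

lemma acyclic_wf (hT : T'.IsPMulTree) : WellFounded T'.arcRel := by
  haveI : Finite T'.V := hT.1.1
  haveI : IsTrans T'.V (Relation.TransGen T'.arcRel) := inferInstance
  haveI : IsIrrefl T'.V (Relation.TransGen T'.arcRel) := ⟨hT.1.2.2.1⟩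
  exact Subrelation.wf (fun h => Relation.TransGen.single h)
    (Finite.wellFounded_of_trans_of_irrefl _)

lemma psi_surj (hT : T'.IsPMulTree) (hg : g.IsFolding) (hroot : g.fV T'.root = N.root)
    (w : T'.V) : ∃ (u : N.V) (p : RPath N u), (psi hg hroot p).1 = w := by
  induction w using (acyclic_wf hT).induction with
  | _ w ih =>
    by_cases hw : w = T'.root
    · subst hw; exact ⟨N.root, .nil, rfl⟩
    · have h1 : T'.indeg w = 1 := hT.2.1 w hw
      obtain ⟨b, hb⟩ : ∃ b, T'.hd b = w := by
        obtain ⟨⟨b, hb⟩⟩ := (Nat.card_eq_one_iff_unique.mp h1).2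
        exact ⟨b, hb⟩
      obtain ⟨u, p, hp⟩ := ih (T'.tl b) ⟨b, rfl, hb⟩
      have htl : N.tl (g.fA b) = u := by
        rw [g.tl_comm, ← hp]; exact (psi hg hroot p).2
      refine ⟨N.hd (g.fA b), .cons p (g.fA b) htl, ?_⟩
      show T'.hd (lift hg (g.fA b) (psi hg hroot p).1
        ((psi hg hroot p).2.trans htl.symm)) = w
      rw [← lift_eq hg _ _ _ b hp.symm rfl]
      exact hb

noncomputable def psiA (hg : g.IsFolding) (hroot : g.fV T'.root = N.root)
    (x : N.Ustar.A) : T'.A :=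
  lift hg x.2.2.1 (psi hg hroot x.2.1).1 ((psi hg hroot x.2.1).2.trans x.2.2.2.symm)

lemma psiA_tl (hg : g.IsFolding) (hroot : g.fV T'.root = N.root) (x : N.Ustar.A) :
    T'.tl (psiA hg hroot x) = (psi hg hroot x.2.1).1 := lift_tl _ _ _ _

lemma psiA_fA (hg : g.IsFolding) (hroot : g.fV T'.root = N.root) (x : N.Ustar.A) :
    g.fA (psiA hg hroot x) = x.2.2.1 := lift_fA _ _ _ _

lemma psiA_inj (hT : T'.IsPMulTree) (hg : g.IsFolding) (hroot : g.fV T'.root = N.root) :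
    Function.Injective (psiA hg hroot) := by
  rintro ⟨v, p, a, ha⟩ ⟨v', p', a', ha'⟩ hE
  have h1 : g.fA (psiA hg hroot ⟨v, p, a, ha⟩) = a := psiA_fA hg hroot _
  have h2 : g.fA (psiA hg hroot ⟨v', p', a', ha'⟩) = a' := psiA_fA hg hroot _
  have hfa : a = a' := by rw [← h1, ← h2, hE]
  have h3 : T'.tl (psiA hg hroot ⟨v, p, a, ha⟩) = (psi hg hroot p).1 :=
    psiA_tl hg hroot _
  have h4 : T'.tl (psiA hg hroot ⟨v', p', a', ha'⟩) = (psi hg hroot p').1 :=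
    psiA_tl hg hroot _
  have hs : (⟨v, p⟩ : Σ u, RPath N u) = ⟨v', p'⟩ :=
    psi_inj hT hg hroot p p' (by rw [← h3, ← h4, hE])
  subst hfa
  injection hs with hv hq
  subst hv
  cases hq
  rfl

lemma psiA_surj (hT : T'.IsPMulTree) (hg : g.IsFolding) (hroot : g.fV T'.root = N.root) :
    Function.Surjective (psiA hg hroot) := by
  intro b
  obtain ⟨u, p, hp⟩ := psi_surj hT hg hroot (T'.tl b)
  have ha : N.tl (g.fA b) = u := by
    rw [g.tl_comm, ← hp]; exact (psi hg hroot p).2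
  exact ⟨⟨u, p, g.fA b, ha⟩, (lift_eq hg _ _ _ b hp.symm rfl).symm⟩

lemma lab_eq (hT : T'.IsPMulTree) (hN : N.IsPhyloNetwork) (hg : g.IsFolding)
    (w : T'.V) : N.lab (g.fV w) = T'.lab w := by
  cases hl : T'.lab w with
  | some x => exact g.lab_pres w x hl
  | none =>
    by_contra hne
    obtain ⟨y, hy⟩ : ∃ y, N.lab (g.fV w) = some y := by
      cases h2 : N.lab (g.fV w) with
      | none => exact absurd h2 hne
      | some y => exact ⟨y, rfl⟩
    have hleafN : N.IsLeaf (g.fV w) := (hN.1.2.2.2.1 (g.fV w)).1 ⟨y, hy⟩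
    have hnotleaf : ¬ T'.IsLeaf w := fun hL => by
      obtain ⟨x, hx⟩ := (hT.2.2.1 w).2 hL
      rw [hl] at hx
      exact (Option.some_ne_none x) hx.symm
    have hout : Nonempty {a : T'.A // T'.tl a = w} := by
      by_contra hne2
      haveI : IsEmpty {a : T'.A // T'.tl a = w} := not_nonempty_iff.mp hne2
      exact hnotleaf (Nat.card_of_isEmpty)
    obtain ⟨⟨b, hb⟩⟩ := hout
    haveI : Finite N.A := hN.1.1.2.1
    haveI : Nonempty {a : N.A // N.tl a = g.fV w} := ⟨⟨g.fA b, by rw [g.tl_comm, hb]⟩⟩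
    have : (0 : ℕ) < N.outdeg (g.fV w) := Nat.card_pos
    exact this.ne' hleafN

end FoldAux

end Dgr

/-- If a pseudo MUL-tree `T'` on `X` admits a folding map
onto a phylogenetic network `N` on `X`, then `T'` is isomorphic to the
path-tree `U*(N)`. -/
theorem folding_domain_unique (X : Type) (T' N : Dgr X) (hT' : T'.IsPMulTree)
    (hN : N.IsPhyloNetwork) (g : Dgr.Mor T' N) (hg : g.IsFolding) :
    Dgr.Iso T' N.Ustar := by
  classical
  have hroot : g.fV T'.root = N.root := Dgr.FoldAux.fV_root hT' hN hg
  let ΨV : N.Ustar.V → T'.V := fun x => (Dgr.FoldAux.psi hg hroot x.2).1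
  have hVbij : Function.Bijective ΨV := by
    constructor
    · rintro ⟨u, p⟩ ⟨u', p'⟩ hxy
      exact Dgr.FoldAux.psi_inj hT' hg hroot p p' hxy
    · intro w
      obtain ⟨u, p, hp⟩ := Dgr.FoldAux.psi_surj hT' hg hroot w
      exact ⟨⟨u, p⟩, hp⟩
  have hAbij : Function.Bijective (Dgr.FoldAux.psiA hg hroot) :=
    ⟨Dgr.FoldAux.psiA_inj hT' hg hroot, Dgr.FoldAux.psiA_surj hT' hg hroot⟩
  let eV : N.Ustar.V ≃ T'.V := Equiv.ofBijective ΨV hVbij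
  let eA : N.Ustar.A ≃ T'.A := Equiv.ofBijective _ hAbij
  have heV : ∀ x, eV x = ΨV x := fun _ => rfl
  have heA : ∀ x, eA x = Dgr.FoldAux.psiA hg hroot x := fun _ => rfl
  refine ⟨eV.symm, eA.symm, ?_, ?_, ?_, ?_⟩
  · intro a
    rw [Equiv.eq_symm_apply, heV]
    have hx : Dgr.FoldAux.psiA hg hroot (eA.symm a) = a := eA.apply_symm_apply a
    calc ΨV (N.Ustar.tl (eA.symm a))
        = T'.tl (Dgr.FoldAux.psiA hg hroot (eA.symm a)) :=
          (Dgr.FoldAux.psiA_tl hg hroot (eA.symm a)).symm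
      _ = T'.tl a := by rw [hx]
  · intro a
    rw [Equiv.eq_symm_apply, heV]
    have hx : Dgr.FoldAux.psiA hg hroot (eA.symm a) = a := eA.apply_symm_apply a
    have key : ∀ x : N.Ustar.A,
        ΨV (N.Ustar.hd x) = T'.hd (Dgr.FoldAux.psiA hg hroot x) := by
      rintro ⟨v, p, a', ha'⟩
      rfl
    rw [key (eA.symm a), hx]
  · rw [Equiv.symm_apply_eq]
    rfl
  · intro v
    have hlab : ∀ x : N.Ustar.V, N.Ustar.lab x = T'.lab (ΨV x) := by
      rintro ⟨u, p⟩
      have h1 := Dgr.FoldAux.lab_eq hT' hN hg (Dgr.FoldAux.psi hg hroot p).1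
      have h2 := (Dgr.FoldAux.psi hg hroot p).2
      show N.lab u = T'.lab (Dgr.FoldAux.psi hg hroot p).1
      rw [← h1, h2]
    rw [hlab (eV.symm v), show ΨV (eV.symm v) = v from eV.apply_symm_apply v]
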